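/- arXiv:1803.00481 — 2 statements merged into one kernel-verified Lean document; each statement's English description precedes it below -/
import Mathlib

section
/- Under the standing assumptions, suppose W₁ is an initial walk from i to 1 on the trellis digraph 𝒯_{Γ(k)} of maximal weight, i.e. p_𝒯(W₁) = w_i*. Then its length satisfies l(W₁) ≤ (w_i* − α_i)/λ* + (n − 1). -/
/-
Common framework for "A bound for the rank-one transient of inhomogeneous matrix
products in special case" (Kennedy-Cochran-Patrick, Sergeev, Berežný).

We work over the max-plus semiring, modelled inside `EReal` (so `⊥ = -∞` is the
max-plus zero and ordinary addition is the max-plus multiplication).  Matrices are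
functions `Fin m → Fin m → EReal`.  The distinguished node "1" of the paper is the
node `0 : Fin (n+2)` (so that `n + 2 ≥ 2` plays the role of the paper's `n ≥ 2`).

A walk is a nonempty list of nodes.  Walks on the trellis digraph of the product
`A 1 ⊗ ⋯ ⊗ A k` additionally record the level at which they start: the arc from the
`(l-1)`-st to the `l`-th node of a walk starting at level `s` has weight given by the
matrix `A (s + l)`.
-/

open scoped Classical

noncomputable section

namespace MaxPlusTransient

variable {m : ℕ}

/-- Weight of a walk on the trellis digraph, starting at level `s`. -/
def tw (M : ℕ → Fin m → Fin m → EReal) : ℕ → List (Fin m) → EReal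
  | _, [] => 0
  | _, [_] => 0
  | s, a :: b :: t => M (s + 1) a b + tw M (s + 1) (b :: t)

/-- Being a walk on the trellis digraph, starting at level `s` (all traversed arcs exist,
i.e. have weight `≠ -∞`); a walk is a nonempty list of nodes. -/
def twalk (M : ℕ → Fin m → Fin m → EReal) : ℕ → List (Fin m) → Prop
  | _, [] => False
  | _, [_] => True
  | s, a :: b :: t => M (s + 1) a b ≠ ⊥ ∧ twalk M (s + 1) (b :: t)

/-- Weight of a walk on the digraph `D_A` of a single matrix `A`. -/
def wWeight (A : Fin m → Fin m → EReal) (W : List (Fin m)) : EReal :=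
  tw (fun _ => A) 0 W

/-- Being a walk on the digraph `D_A` of a matrix `A`. -/
def isWalk (A : Fin m → Fin m → EReal) (W : List (Fin m)) : Prop :=
  twalk (fun _ => A) 0 W

/-- A path is a walk with no repeated nodes. -/
def isPath (A : Fin m → Fin m → EReal) (W : List (Fin m)) : Prop :=
  isWalk A W ∧ W.Nodup

/-- A cycle is a walk of length (number of arcs) at least one whose first and last
nodes coincide. -/
def isCycle (A : Fin m → Fin m → EReal) (W : List (Fin m)) : Prop :=
  isWalk A W ∧ 2 ≤ W.length ∧ W.head? = W.getLast?

/-- A matrix is irreducible iff its digraph is strongly connected. -/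
def irreducible (A : Fin m → Fin m → EReal) : Prop :=
  ∀ i j : Fin m, ∃ W, isWalk A W ∧ W.head? = some i ∧ W.getLast? = some j

/-- Geometric equivalence: the digraphs have the same arcs. -/
def geomEq (A B : Fin m → Fin m → EReal) : Prop :=
  ∀ i j, A i j = ⊥ ↔ B i j = ⊥

/-- Max-plus matrix product. -/
def mp (A B : Fin m → Fin m → EReal) : Fin m → Fin m → EReal :=
  fun i j => ⨆ s, A i s + B s j

/-- `Gamma M k = M 1 ⊗ M 2 ⊗ ⋯ ⊗ M k` (max-plus product), with `Gamma M 0` the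
max-plus identity matrix. -/
def Gamma (M : ℕ → Fin m → Fin m → EReal) : ℕ → Fin m → Fin m → EReal
  | 0 => fun i j => if i = j then 0 else ⊥
  | k + 1 => mp (Gamma M k) (M (k + 1))

/-- An initial walk from `i` to `one` on the trellis digraph of `M 1 ⊗ ⋯ ⊗ M k`:
it starts at node `i` at level `0`, ends at node `one` at some level `≤ k`, and the
only node of the walk equal to `one` is its final node. -/
def isInitialWalk (M : ℕ → Fin m → Fin m → EReal) (one : Fin m) (k : ℕ) (i : Fin m)
    (W : List (Fin m)) : Prop :=
  twalk M 0 W ∧ W.length - 1 ≤ k ∧ W.head? = some i ∧ W.getLast? = some one ∧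
    ∀ v ∈ W.dropLast, v ≠ one

/-- A final walk from `one` to `j` on the trellis digraph of `M 1 ⊗ ⋯ ⊗ M k`:
it starts at node `one` at some level `s`, ends at node `j` at level `k`, and the
only node of the walk equal to `one` is its first node. -/
def isFinalWalk (M : ℕ → Fin m → Fin m → EReal) (one : Fin m) (k : ℕ) (j : Fin m) (s : ℕ)
    (W : List (Fin m)) : Prop :=
  twalk M s W ∧ s + (W.length - 1) = k ∧ W.head? = some one ∧ W.getLast? = some j ∧
    ∀ v ∈ W.tail, v ≠ one

/-- A full walk from `i` to `j` on the trellis digraph of `M 1 ⊗ ⋯ ⊗ M k`: it goes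
from node `i` at level `0` to node `j` at level `k`. -/
def isFullWalk (M : ℕ → Fin m → Fin m → EReal) (k : ℕ) (i j : Fin m)
    (W : List (Fin m)) : Prop :=
  twalk M 0 W ∧ W.length = k + 1 ∧ W.head? = some i ∧ W.getLast? = some j

/-- `w_i*`: maximal weight of an initial walk from `i` to `one`. -/
def wStar (M : ℕ → Fin m → Fin m → EReal) (one : Fin m) (k : ℕ) (i : Fin m) : EReal :=
  sSup {x : EReal | ∃ W, isInitialWalk M one k i W ∧ x = tw M 0 W}

/-- `v_j*`: maximal weight of a final walk from `one` to `j`. -/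
def vStar (M : ℕ → Fin m → Fin m → EReal) (one : Fin m) (k : ℕ) (j : Fin m) : EReal :=
  sSup {x : EReal | ∃ s W, isFinalWalk M one k j s W ∧ x = tw M s W}

/-- `α_i`: maximal weight of a path on `D_A` from `i` to `one`. -/
def alphaE (A : Fin m → Fin m → EReal) (one : Fin m) (i : Fin m) : EReal :=
  sSup {x : EReal | ∃ W, isPath A W ∧ W.head? = some i ∧ W.getLast? = some one ∧
    x = wWeight A W}

/-- `β_j`: maximal weight of a path on `D_A` from `one` to `j`. -/
def betaE (A : Fin m → Fin m → EReal) (one : Fin m) (j : Fin m) : EReal :=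
  sSup {x : EReal | ∃ W, isPath A W ∧ W.head? = some one ∧ W.getLast? = some j ∧
    x = wWeight A W}

/-- `γ_{i,j}`: maximal weight of a path on `D_A` from `i` to `j` not passing through
`one` (`-∞` if no such path exists). -/
def gammaE (A : Fin m → Fin m → EReal) (one : Fin m) (i j : Fin m) : EReal :=
  sSup {x : EReal | ∃ W, isPath A W ∧ W.head? = some i ∧ W.getLast? = some j ∧
    (∀ v ∈ W, v ≠ one) ∧ x = wWeight A W}

/-- The set of mean weights of cycles of `D_A` avoiding the node `one`. -/
def lamSet (A : Fin m → Fin m → EReal) (one : Fin m) : Set ℝ :=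
  {x : ℝ | ∃ W, isCycle A W ∧ (∀ v ∈ W, v ≠ one) ∧
    ∃ r : ℝ, wWeight A W = (r : EReal) ∧ x = r / ((W.length : ℝ) - 1)}

/-- `λ*`: the supremum of the mean weights of cycles of `D_A` avoiding `one`. -/
def lamStar (A : Fin m → Fin m → EReal) (one : Fin m) : ℝ :=
  sSup (lamSet A one)

/-- `w_i`: maximal weight of a walk of length at most `k` from `i` to `one` on `D_A`. -/
def wInf (A : Fin m → Fin m → EReal) (one : Fin m) (k : ℕ) (i : Fin m) : EReal :=
  sSup {x : EReal | ∃ W, isWalk A W ∧ W.length - 1 ≤ k ∧ W.head? = some i ∧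
    W.getLast? = some one ∧ x = wWeight A W}

/-- `v_j`: maximal weight of a walk of length at most `k` from `one` to `j` on `D_A`. -/
def vInf (A : Fin m → Fin m → EReal) (one : Fin m) (k : ℕ) (j : Fin m) : EReal :=
  sSup {x : EReal | ∃ W, isWalk A W ∧ W.length - 1 ≤ k ∧ W.head? = some one ∧
    W.getLast? = some j ∧ x = wWeight A W}

/-- The standing assumptions of the paper on the set `𝒳` and its entrywise boundaries
`Asup` (supremum) and `Ainf` (infimum):
matrices of `𝒳` have no `+∞` entries, `Asup`/`Ainf` are the entrywise sup/inf,
`Asup` has no `+∞` entries and `Ainf` has no `-∞` entries where matrices of `𝒳` are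
finite; all matrices of `𝒳` and also `Ainf` are irreducible and pairwise geometrically
equivalent; every matrix of `𝒳` and also `Asup` has `(one, one)` entry `0` and all its
cycles other than (repetitions of) the loop at `one` have strictly negative (mean)
weight. -/
def Standing (𝒳 : Set (Fin m → Fin m → EReal)) (Asup Ainf : Fin m → Fin m → EReal)
    (one : Fin m) : Prop :=
  𝒳.Nonempty ∧
  (∀ X ∈ 𝒳, ∀ i j, X i j ≠ ⊤) ∧
  (∀ i j, Asup i j = ⨆ X ∈ 𝒳, X i j) ∧
  (∀ i j, Ainf i j = ⨅ X ∈ 𝒳, X i j) ∧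
  (∀ i j, Asup i j ≠ ⊤) ∧
  (∀ X ∈ 𝒳, ∀ i j, X i j ≠ ⊥ → Ainf i j ≠ ⊥) ∧
  (∀ X ∈ 𝒳, irreducible X) ∧
  irreducible Ainf ∧
  (∀ X ∈ 𝒳, geomEq X Ainf) ∧
  (∀ X ∈ 𝒳, X one one = 0) ∧
  (∀ X ∈ 𝒳, ∀ W, isCycle X W → (∃ v ∈ W, v ≠ one) → wWeight X W < 0) ∧
  Asup one one = 0 ∧
  (∀ W, isCycle Asup W → (∃ v ∈ W, v ≠ one) → wWeight Asup W < 0)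

/-! ### Auxiliary machinery -/

/-- Weight of a walk for a constant (level-independent) matrix. -/
def cw (B : Fin m → Fin m → EReal) : List (Fin m) → EReal
  | [] => 0
  | [_] => 0
  | a :: b :: t => B a b + cw B (b :: t)

/-- Being a walk for a constant matrix. -/
def cwalk (B : Fin m → Fin m → EReal) : List (Fin m) → Prop
  | [] => False
  | [_] => True
  | a :: b :: t => B a b ≠ ⊥ ∧ cwalk B (b :: t)

lemma tw_const_eq_cw (B : Fin m → Fin m → EReal) :
    ∀ (s : ℕ) (W : List (Fin m)), tw (fun _ => B) s W = cw B W
  | _, [] => rfl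
  | _, [_] => rfl
  | s, a :: b :: t => by
      show B a b + tw (fun _ => B) (s+1) (b :: t) = B a b + cw B (b :: t)
      rw [tw_const_eq_cw B (s+1) (b :: t)]

lemma twalk_const_iff_cwalk (B : Fin m → Fin m → EReal) :
    ∀ (s : ℕ) (W : List (Fin m)), twalk (fun _ => B) s W ↔ cwalk B W
  | _, [] => Iff.rfl
  | _, [_] => Iff.rfl
  | s, a :: b :: t => by
      show (B a b ≠ ⊥ ∧ twalk (fun _ => B) (s+1) (b :: t)) ↔ (B a b ≠ ⊥ ∧ cwalk B (b :: t))
      rw [twalk_const_iff_cwalk B (s+1) (b :: t)]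

lemma wWeight_eq_cw (B : Fin m → Fin m → EReal) (W : List (Fin m)) :
    wWeight B W = cw B W := tw_const_eq_cw B 0 W

lemma isWalk_iff_cwalk (B : Fin m → Fin m → EReal) (W : List (Fin m)) :
    isWalk B W ↔ cwalk B W := twalk_const_iff_cwalk B 0 W

lemma cw_append (B : Fin m → Fin m → EReal) :
    ∀ (P : List (Fin m)) (v : Fin m) (S : List (Fin m)),
      cw B (P ++ v :: S) = cw B (P ++ [v]) + cw B (v :: S)
  | [], v, S => by simp [cw]
  | [a], v, S => by
      show B a v + cw B (v :: S) = (B a v + cw B [v]) + cw B (v :: S)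
      simp [cw]
  | a :: b :: P, v, S => by
      show B a b + cw B (b :: (P ++ v :: S)) = (B a b + cw B (b :: (P ++ [v]))) + cw B (v :: S)
      rw [← List.cons_append, cw_append B (b :: P) v S, ← List.cons_append, add_assoc]

lemma cwalk_append (B : Fin m → Fin m → EReal) :
    ∀ (P : List (Fin m)) (v : Fin m) (S : List (Fin m)),
      cwalk B (P ++ v :: S) ↔ cwalk B (P ++ [v]) ∧ cwalk B (v :: S)
  | [], v, S => by simp [cwalk]
  | [a], v, S => by
      show (B a v ≠ ⊥ ∧ cwalk B (v :: S)) ↔ (B a v ≠ ⊥ ∧ cwalk B [v]) ∧ cwalk B (v :: S)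
      simp [cwalk]
  | a :: b :: P, v, S => by
      show (B a b ≠ ⊥ ∧ cwalk B (b :: (P ++ v :: S))) ↔
        (B a b ≠ ⊥ ∧ cwalk B (b :: (P ++ [v]))) ∧ cwalk B (v :: S)
      rw [← List.cons_append, cwalk_append B (b :: P) v S, ← List.cons_append]; tauto

lemma cw_surgery (B : Fin m → Fin m → EReal) (P Q R : List (Fin m)) (v : Fin m) :
    cw B (P ++ v :: (Q ++ v :: R)) = cw B (P ++ v :: R) + cw B (v :: (Q ++ [v])) := by
  have h2 : cw B (v :: (Q ++ v :: R)) = cw B (v :: (Q ++ [v])) + cw B (v :: R) := by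
    have := cw_append B (v :: Q) v R
    simpa using this
  rw [cw_append B P v (Q ++ v :: R), h2, cw_append B P v R]
  abel

lemma cwalk_surgery (B : Fin m → Fin m → EReal) {P Q R : List (Fin m)} {v : Fin m}
    (h : cwalk B (P ++ v :: (Q ++ v :: R))) :
    cwalk B (P ++ v :: R) ∧ cwalk B (v :: (Q ++ [v])) := by
  rw [cwalk_append B P v (Q ++ v :: R)] at h
  obtain ⟨h1, h2⟩ := h
  have h2' : cwalk B (v :: (Q ++ [v])) ∧ cwalk B (v :: R) := by
    have := (cwalk_append B (v :: Q) v R)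
    simp only [List.cons_append, List.append_assoc] at this ⊢
    exact this.mp (by simpa using h2)
  exact ⟨(cwalk_append B P v R).mpr ⟨h1, h2'.2⟩, h2'.1⟩

lemma cwalk_ne_nil {B : Fin m → Fin m → EReal} {W : List (Fin m)} (h : cwalk B W) :
    W ≠ [] := by
  intro hW; subst hW; exact h

lemma cwalk_real (B : Fin m → Fin m → EReal) (hB : ∀ i j, B i j ≠ ⊤) :
    ∀ W : List (Fin m), cwalk B W → ∃ w : ℝ, cw B W = (w : EReal)
  | [], h => absurd h (by simp [cwalk])
  | [_], _ => ⟨0, by simp [cw]⟩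
  | a :: b :: t, h => by
      obtain ⟨hne, ht⟩ := h
      obtain ⟨w, hw⟩ := cwalk_real B hB (b :: t) ht
      refine ⟨(B a b).toReal + w, ?_⟩
      show B a b + cw B (b :: t) = _
      rw [hw, EReal.coe_add, EReal.coe_toReal (hB a b) hne]

lemma exists_dup_split {α : Type*} :
    ∀ (L : List α), ¬ L.Nodup → ∃ (P : List α) (v : α) (Q R : List α),
      L = P ++ v :: (Q ++ v :: R)
  | [], h => absurd List.nodup_nil h
  | a :: t, h => by
      by_cases ha : a ∈ t
      · obtain ⟨Q, R, rfl⟩ := List.append_of_mem ha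
        exact ⟨[], a, Q, R, rfl⟩
      · have ht : ¬ t.Nodup := fun hnd => h (List.nodup_cons.mpr ⟨ha, hnd⟩)
        obtain ⟨P, v, Q, R, rfl⟩ := exists_dup_split t ht
        exact ⟨a :: P, v, Q, R, rfl⟩

/-- The set of simple cycles avoiding `one` (for a constant matrix `B`). -/
def sCycSet (B : Fin m → Fin m → EReal) (one : Fin m) : Set (List (Fin m)) :=
  {W | cwalk B W ∧ 2 ≤ W.length ∧ W.head? = W.getLast? ∧ (∀ v ∈ W, v ≠ one) ∧
    W.dropLast.Nodup}

lemma sCycSet_finite (B : Fin m → Fin m → EReal) (one : Fin m) :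
    (sCycSet B one).Finite := by
  apply (List.finite_length_le (Fin m) (m + 1)).subset
  rintro W ⟨_, h2, _, _, hnd⟩
  have h1 := List.Nodup.length_le_card hnd
  simp only [List.length_dropLast, Fintype.card_fin] at h1
  simp only [Set.mem_setOf_eq]
  omega

/-- Mean weight of a cycle. -/
def meanOf (B : Fin m → Fin m → EReal) (W : List (Fin m)) : ℝ :=
  (cw B W).toReal / ((W.length : ℝ) - 1)

def meansSet (B : Fin m → Fin m → EReal) (one : Fin m) : Set ℝ :=
  meanOf B '' sCycSet B one

/-- Surgery on a non-simple cycle: split off a subcycle. -/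
lemma cycle_split {B : Fin m → Fin m → EReal} {one : Fin m} {W : List (Fin m)}
    (hW : cwalk B W) (h2 : 2 ≤ W.length) (hhl : W.head? = W.getLast?)
    (hav : ∀ v ∈ W, v ≠ one) (hnd : ¬ W.dropLast.Nodup) :
    ∃ (W' C : List (Fin m)),
      cwalk B W' ∧ 2 ≤ W'.length ∧ W'.head? = W'.getLast? ∧ (∀ v ∈ W', v ≠ one) ∧
      cwalk B C ∧ 2 ≤ C.length ∧ C.head? = C.getLast? ∧ (∀ v ∈ C, v ≠ one) ∧
      W'.length < W.length ∧ C.length < W.length ∧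
      W.length + 1 = W'.length + C.length ∧
      cw B W = cw B W' + cw B C := by
  have hne : W ≠ [] := cwalk_ne_nil hW
  set x := W.getLast hne with hx
  have hdec : W.dropLast ++ [x] = W := List.dropLast_append_getLast hne
  obtain ⟨P, v, Q, R', hsplit⟩ := exists_dup_split _ hnd
  have hW2 : W = P ++ v :: (Q ++ v :: (R' ++ [x])) := by
    rw [← hdec, hsplit]; simp
  set R : List (Fin m) := R' ++ [x] with hR
  refine ⟨P ++ v :: R, v :: (Q ++ [v]), ?_⟩
  have hWlen : W.length = P.length + Q.length + R.length + 2 := by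
    rw [hW2]; simp; omega
  have hRlen : 1 ≤ R.length := by rw [hR]; simp
  have hsurg := cw_surgery B P Q R v
  have hwalks := cwalk_surgery (B := B) (P := P) (Q := Q) (R := R) (v := v) (hW2 ▸ hW)
  have hWlast : W.getLast? = some x := by
    rw [← hdec]; exact List.getLast?_concat
  have hW'last : (P ++ v :: R).getLast? = some x := by
    rw [show P ++ v :: R = (P ++ v :: R') ++ [x] by rw [hR]; simp]
    exact List.getLast?_concat
  have hW'head : (P ++ v :: R).head? = W.head? := by
    rw [hW2]; simp [List.head?_append]
  have hClast : (v :: (Q ++ [v])).getLast? = some v := by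
    rw [show v :: (Q ++ [v]) = (v :: Q) ++ [v] by simp]
    exact List.getLast?_concat
  have hmemW' : ∀ u ∈ P ++ v :: R, u ∈ W := by
    intro u hu
    rw [hW2]
    simp only [List.mem_append, List.mem_cons] at hu ⊢
    tauto
  have hmemC : ∀ u ∈ v :: (Q ++ [v]), u ∈ W := by
    intro u hu
    rw [hW2]
    simp only [List.mem_append, List.mem_cons] at hu ⊢
    tauto
  refine ⟨hwalks.1, ?_, ?_, fun u hu => hav u (hmemW' u hu),
    hwalks.2, ?_, by simp [hClast], fun u hu => hav u (hmemC u hu), ?_, ?_, ?_, hW2 ▸ hsurg⟩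
  · simp; omega
  · rw [hW'last, hW'head, hhl, hWlast]
  · simp
  · simp [hWlen]; omega
  · simp [hWlen]; omega
  · simp [hWlen]; omega

/-- Every cycle avoiding `one` has weight at most `μ` times its length, where `μ`
bounds the means of simple cycles avoiding `one`. -/
lemma cycle_le (B : Fin m → Fin m → EReal) (one : Fin m) (hB : ∀ i j, B i j ≠ ⊤) (μ : ℝ)
    (hμ : ∀ W ∈ sCycSet B one, meanOf B W ≤ μ) :
    ∀ (N : ℕ) (W : List (Fin m)), W.length ≤ N → cwalk B W → 2 ≤ W.length →
      W.head? = W.getLast? → (∀ v ∈ W, v ≠ one) →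
      ∃ w : ℝ, cw B W = (w : EReal) ∧ w ≤ μ * ((W.length : ℝ) - 1) := by
  intro N
  induction N with
  | zero => intro W hlen _ h2 _ _; omega
  | succ N ih =>
    intro W hlen hW h2 hhl hav
    by_cases hnd : W.dropLast.Nodup
    · have hWs : W ∈ sCycSet B one := ⟨hW, h2, hhl, hav, hnd⟩
      obtain ⟨w, hw⟩ := cwalk_real B hB W hW
      refine ⟨w, hw, ?_⟩
      have hm := hμ W hWs
      rw [meanOf, hw, EReal.toReal_coe] at hm
      have hpos : (0 : ℝ) < (W.length : ℝ) - 1 := by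
        have : (2 : ℝ) ≤ (W.length : ℝ) := by exact_mod_cast h2
        linarith
      exact (div_le_iff₀ hpos).mp hm
    · obtain ⟨W', C, hW'1, hW'2, hW'3, hW'4, hC1, hC2, hC3, hC4, hlt1, hlt2, hsum, hcw⟩ :=
        cycle_split hW h2 hhl hav hnd
      obtain ⟨w', hw', hle'⟩ := ih W' (by omega) hW'1 hW'2 hW'3 hW'4
      obtain ⟨wc, hwc, hlec⟩ := ih C (by omega) hC1 hC2 hC3 hC4
      refine ⟨w' + wc, by rw [hcw, hw', hwc, EReal.coe_add], ?_⟩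
      have hlensum : (W.length : ℝ) - 1 = ((W'.length : ℝ) - 1) + ((C.length : ℝ) - 1) := by
        have : (W.length : ℝ) + 1 = (W'.length : ℝ) + (C.length : ℝ) := by exact_mod_cast hsum
        linarith
      rw [hlensum, mul_add]
      exact add_le_add hle' hlec

/-- If there is a cycle avoiding `one`, there is a simple one. -/
lemma exists_simple_cycle (B : Fin m → Fin m → EReal) (one : Fin m) :
    ∀ (N : ℕ) (W : List (Fin m)), W.length ≤ N → cwalk B W → 2 ≤ W.length →
      W.head? = W.getLast? → (∀ v ∈ W, v ≠ one) → (sCycSet B one).Nonempty := by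
  intro N
  induction N with
  | zero => intro W hlen _ h2 _ _; omega
  | succ N ih =>
    intro W hlen hW h2 hhl hav
    by_cases hnd : W.dropLast.Nodup
    · exact ⟨W, hW, h2, hhl, hav, hnd⟩
    · obtain ⟨W', C, hW'1, hW'2, hW'3, hW'4, _, _, _, _, hlt1, _, _, _⟩ :=
        cycle_split hW h2 hhl hav hnd
      exact ih W' (by omega) hW'1 hW'2 hW'3 hW'4

/-- Main decomposition bound: a walk from `i` to `one` whose only node equal to `one`
is its last one decomposes into a path plus cycles avoiding `one`. -/
lemma walk_bound (B : Fin m → Fin m → EReal) (one : Fin m) (hB : ∀ i j, B i j ≠ ⊤)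
    (lam aR : ℝ) (i : Fin m)
    (hcyc : ∀ W : List (Fin m), cwalk B W → 2 ≤ W.length → W.head? = W.getLast? →
      (∀ v ∈ W, v ≠ one) → ∃ w : ℝ, cw B W = (w : EReal) ∧ w ≤ lam * ((W.length : ℝ) - 1))
    (hpath : ∀ W : List (Fin m), cwalk B W → W.Nodup → W.head? = some i →
      W.getLast? = some one → cw B W ≤ (aR : EReal)) :
    ∀ (N : ℕ) (W : List (Fin m)), W.length ≤ N → cwalk B W → W.head? = some i →
      W.getLast? = some one → (∀ v ∈ W.dropLast, v ≠ one) →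
      ∃ (p c : ℕ) (w : ℝ), p + 1 ≤ m ∧ W.length = p + c + 1 ∧ cw B W = (w : EReal) ∧
        w ≤ aR + lam * (c : ℝ) := by
  intro N
  induction N with
  | zero =>
    intro W hlen hW _ _ _
    exact absurd (List.length_eq_zero_iff.mp (by omega)) (cwalk_ne_nil hW)
  | succ N ih =>
    intro W hlen hW hh hl hav
    have hWne : W ≠ [] := cwalk_ne_nil hW
    have hW1 : 1 ≤ W.length := by
      cases W with
      | nil => exact absurd rfl hWne
      | cons a t => simp
    by_cases hnd : W.Nodup
    · obtain ⟨w, hw⟩ := cwalk_real B hB W hW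
      have hcard : W.length ≤ m := by
        have := List.Nodup.length_le_card hnd
        simpa using this
      refine ⟨W.length - 1, 0, w, by omega, by omega, hw, ?_⟩
      have := hpath W hW hnd hh hl
      rw [hw] at this
      have hwa : w ≤ aR := by exact_mod_cast this
      simpa using hwa
    · obtain ⟨P, v, Q, R', hsplit⟩ := exists_dup_split _ hnd
      -- the second occurrence of `v` cannot be the last node of `W`
      have hRne : R' ≠ [] := by
        intro hR0
        subst hR0
        have hWeq : W = (P ++ v :: Q) ++ [v] := by rw [hsplit]; simp
        have hvone : v = one := by
          have := hWeq ▸ hl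
          rw [List.getLast?_concat] at this
          exact Option.some_injective _ this
        have hvmem : v ∈ W.dropLast := by
          rw [hWeq, List.dropLast_concat]
          simp
        exact (hav v hvmem) hvone
      obtain ⟨R'', x, hR'⟩ := (List.eq_nil_or_concat R').resolve_left hRne
      rw [List.concat_eq_append] at hR'
      subst hR'
      set R : List (Fin m) := R'' ++ [x] with hR
      have hW2 : W = P ++ v :: (Q ++ v :: R) := hsplit
      -- surgery
      have hsurg := cw_surgery B P Q R v
      have hwalks := cwalk_surgery (B := B) (P := P) (Q := Q) (R := R) (v := v) (hW2 ▸ hW)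
      -- drops
      have hdropW : W.dropLast = P ++ v :: (Q ++ v :: R'') := by
        rw [hW2, show P ++ v :: (Q ++ v :: R) = (P ++ v :: (Q ++ v :: R'')) ++ [x] by
          rw [hR]; simp, List.dropLast_concat]
      have hdropW' : (P ++ v :: R).dropLast = P ++ v :: R'' := by
        rw [show P ++ v :: R = (P ++ v :: R'') ++ [x] by rw [hR]; simp,
          List.dropLast_concat]
      -- cycle C avoids one
      have hCav : ∀ u ∈ v :: (Q ++ [v]), u ≠ one := by
        intro u hu
        apply hav
        rw [hdropW]
        simp only [List.mem_append, List.mem_cons] at hu ⊢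
        tauto
      have hC2 : 2 ≤ (v :: (Q ++ [v])).length := by simp
      have hChl : (v :: (Q ++ [v])).head? = (v :: (Q ++ [v])).getLast? := by
        rw [show v :: (Q ++ [v]) = (v :: Q) ++ [v] by simp, List.getLast?_concat]
        simp
      obtain ⟨wc, hwc, hlec⟩ := hcyc _ hwalks.2 hC2 hChl hCav
      -- the remaining walk
      have hW'h : (P ++ v :: R).head? = some i := by
        rw [← hh, hW2]
        simp [List.head?_append]
      have hW'l : (P ++ v :: R).getLast? = some one := by
        rw [← hl, hW2,
          show P ++ v :: (Q ++ v :: R) = (P ++ v :: (Q ++ v :: R'')) ++ [x] by rw [hR]; simp,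
          show P ++ v :: R = (P ++ v :: R'') ++ [x] by rw [hR]; simp,
          List.getLast?_concat, List.getLast?_concat]
      have hW'av : ∀ u ∈ (P ++ v :: R).dropLast, u ≠ one := by
        intro u hu
        apply hav
        rw [hdropW']  at hu
        rw [hdropW]
        simp only [List.mem_append, List.mem_cons] at hu ⊢
        tauto
      have hlenW : W.length = P.length + Q.length + R.length + 2 := by
        rw [hW2]; simp; omega
      have hlenW' : (P ++ v :: R).length = P.length + R.length + 1 := by simp; omega
      obtain ⟨p, c', w', hpm, hlen', hw', hle'⟩ :=
        ih (P ++ v :: R) (by omega) hwalks.1 hW'h hW'l hW'av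
      refine ⟨p, c' + (Q.length + 1), w' + wc,  hpm, by omega,
        by rw [hW2, hsurg, hw', hwc, EReal.coe_add], ?_⟩
      have hClen : ((v :: (Q ++ [v])).length : ℝ) - 1 = (Q.length : ℝ) + 1 := by
        push_cast [List.length_cons, List.length_append, List.length_nil]
        ring
      rw [hClen] at hlec
      have : (((c' + (Q.length + 1)) : ℕ) : ℝ) = (c' : ℝ) + ((Q.length : ℝ) + 1) := by
        push_cast; ring
      rw [this, mul_add]
      linarith

/-- Comparison of a trellis walk with the walk on the entrywise larger constant matrix. -/
lemma tw_le_cw (M : ℕ → Fin m → Fin m → EReal) (B : Fin m → Fin m → EReal) :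
    ∀ (s : ℕ) (W : List (Fin m)),
      (∀ l, s < l → l < s + W.length → ∀ x y, M l x y ≤ B x y) →
      twalk M s W → cwalk B W ∧ tw M s W ≤ cw B W
  | _, [], _, hw => absurd hw (by simp [twalk])
  | _, [_], _, _ => ⟨trivial, le_of_eq rfl⟩
  | s, a :: b :: t, h, hw => by
    obtain ⟨hab, ht⟩ := hw
    have harc : M (s + 1) a b ≤ B a b :=
      h (s + 1) (by omega) (by simp only [List.length_cons]; omega) a b
    obtain ⟨hc, hle⟩ := tw_le_cw M B (s + 1) (b :: t)
      (fun l h1 h2 => h l (by omega) (by simp at h2 ⊢; omega)) ht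
    refine ⟨⟨fun hbot => hab (le_bot_iff.mp (hbot ▸ harc)), hc⟩, ?_⟩
    show M (s + 1) a b + tw M (s + 1) (b :: t) ≤ B a b + cw B (b :: t)
    exact add_le_add harc hle

/-- length bound for a maximal-weight initial walk. -/
theorem rank_one_transient_statement0 {n : ℕ}
    (𝒳 : Set (Fin (n + 2) → Fin (n + 2) → EReal))
    (Asup Ainf : Fin (n + 2) → Fin (n + 2) → EReal)
    (hstand : Standing 𝒳 Asup Ainf 0)
    (k : ℕ) (hk : 1 ≤ k)
    (A : ℕ → Fin (n + 2) → Fin (n + 2) → EReal)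
    (hA : ∀ l, 1 ≤ l → l ≤ k → A l ∈ 𝒳)
    -- `D_{A^sup}` has at least one cycle avoiding node `one`, so `λ*` is finite
    (hcyc : ∃ W, isCycle Asup W ∧ ∀ v ∈ W, v ≠ (0 : Fin (n + 2)))
    (i : Fin (n + 2))
    -- `α_i` is the (finite) maximal weight of a path from `i` to `one` on `D_{A^sup}`
    (a : ℝ) (ha : (a : EReal) = alphaE Asup 0 i)
    -- `W₁` is an initial walk from `i` to `one` of maximal weight `w_i* = r`
    (r : ℝ) (W₁ : List (Fin (n + 2)))
    (h1 : isInitialWalk A 0 k i W₁)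
    (hw : tw A 0 W₁ = (r : EReal))
    (hopt : (r : EReal) = wStar A 0 k i) :
    (W₁.length : ℝ) - 1 ≤ (r - a) / lamStar Asup 0 + ((n + 2 : ℝ) - 1) := by
  obtain ⟨hXne, hnotop, hsup, hinf, hsupnotop, hbot, hirr, hirrinf, hgeom, hdiag, hXcyc,
    hsupdiag, hsupcyc⟩ := hstand
  obtain ⟨htw, hlenk, hh, hl, hdrop⟩ := h1
  -- W₁ is a walk on `D_{Asup}` and its trellis weight is at most its `Asup`-weight
  have hAle : ∀ l, 0 < l → l < 0 + W₁.length → ∀ x y, A l x y ≤ Asup x y := by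
    intro l h1' h2' x y
    have hmem : A l ∈ 𝒳 := hA l h1' (by omega)
    rw [hsup x y]
    exact le_biSup (fun X => X x y) hmem
  obtain ⟨hcwalk, htwle⟩ := tw_le_cw A Asup 0 W₁ hAle htw
  -- cycles of `Asup` avoiding `0` have negative weight, in `cw` form
  have hcycneg : ∀ W : List (Fin (n + 2)), cwalk Asup W → 2 ≤ W.length →
      W.head? = W.getLast? → (∀ v ∈ W, v ≠ 0) → cw Asup W < 0 := by
    intro W h1' h2' h3' h4'
    have hCyc : isCycle Asup W := ⟨(isWalk_iff_cwalk _ _).mpr h1', h2', h3'⟩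
    have hv : ∃ v ∈ W, v ≠ (0 : Fin (n + 2)) := by
      cases W with
      | nil => simp at h2'
      | cons b t => exact ⟨b, by simp, h4' b (by simp)⟩
    have := hsupcyc W hCyc hv
    rwa [wWeight_eq_cw] at this
  -- the maximal simple-cycle mean `μ` is negative
  obtain ⟨Wc, hWc, hWcav⟩ := hcyc
  obtain ⟨hWcwalk, hWc2, hWchl⟩ := hWc
  have hWccwalk := (isWalk_iff_cwalk _ _).mp hWcwalk
  have hSne : (sCycSet Asup 0).Nonempty :=
    exists_simple_cycle Asup 0 Wc.length Wc le_rfl hWccwalk hWc2 hWchl hWcav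
  have hSfin := sCycSet_finite Asup (0 : Fin (n + 2))
  have hMne : (meansSet Asup 0).Nonempty := hSne.image _
  have hMfin : (meansSet Asup 0).Finite := hSfin.image _
  set μ := sSup (meansSet Asup 0) with hμdef
  have hμmem : μ ∈ meansSet Asup 0 := hMne.csSup_mem hMfin
  have hMneg : ∀ x ∈ meansSet Asup 0, x < 0 := by
    rintro x ⟨W, ⟨h1', h2', h3', h4', _⟩, rfl⟩
    obtain ⟨w, hwW⟩ := cwalk_real Asup hsupnotop W h1'
    have hneg : cw Asup W < 0 := hcycneg W h1' h2' h3' h4'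
    rw [hwW] at hneg
    have hwneg : w < 0 := by exact_mod_cast hneg
    have hpos : (0 : ℝ) < (W.length : ℝ) - 1 := by
      have : (2 : ℝ) ≤ (W.length : ℝ) := by exact_mod_cast h2'
      linarith
    rw [meanOf, hwW, EReal.toReal_coe]
    exact div_neg_of_neg_of_pos hwneg hpos
  have hμneg : μ < 0 := hMneg μ hμmem
  have hμub : ∀ W ∈ sCycSet Asup 0, meanOf Asup W ≤ μ :=
    fun W hW => le_csSup hMfin.bddAbove ⟨W, hW, rfl⟩
  -- `lamSet` is bounded above by `μ`
  have hlamle : ∀ x ∈ lamSet Asup 0, x ≤ μ := by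
    rintro x ⟨W, ⟨hWwalk, hW2, hWhl⟩, hWav, rr, hwr, rfl⟩
    have hc := (isWalk_iff_cwalk _ _).mp hWwalk
    obtain ⟨w, hwW, hwle⟩ := cycle_le Asup 0 hsupnotop μ hμub W.length W le_rfl hc hW2 hWhl hWav
    have hrrw : rr = w := by
      rw [wWeight_eq_cw, hwW] at hwr
      exact_mod_cast hwr.symm
    subst hrrw
    have hpos : (0 : ℝ) < (W.length : ℝ) - 1 := by
      have : (2 : ℝ) ≤ (W.length : ℝ) := by exact_mod_cast hW2
      linarith
    exact (div_le_iff₀ hpos).mpr (by linarith)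
  have hlamne : (lamSet Asup 0).Nonempty := by
    obtain ⟨w, hwW⟩ := cwalk_real Asup hsupnotop Wc hWccwalk
    exact ⟨w / ((Wc.length : ℝ) - 1), Wc, ⟨hWcwalk, hWc2, hWchl⟩, hWcav, w,
      by rw [wWeight_eq_cw]; exact hwW, rfl⟩
  have hlambdd : BddAbove (lamSet Asup 0) := ⟨μ, hlamle⟩
  have hlamneg : lamStar Asup 0 < 0 := lt_of_le_of_lt (csSup_le hlamne hlamle) hμneg
  -- every cycle avoiding `0` has weight at most `λ*` times its length
  have hcycbound : ∀ W : List (Fin (n + 2)), cwalk Asup W → 2 ≤ W.length →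
      W.head? = W.getLast? → (∀ v ∈ W, v ≠ 0) →
      ∃ w : ℝ, cw Asup W = (w : EReal) ∧ w ≤ lamStar Asup 0 * ((W.length : ℝ) - 1) := by
    intro W h1' h2' h3' h4'
    obtain ⟨w, hwW⟩ := cwalk_real Asup hsupnotop W h1'
    refine ⟨w, hwW, ?_⟩
    have hmem : w / ((W.length : ℝ) - 1) ∈ lamSet Asup 0 :=
      ⟨W, ⟨(isWalk_iff_cwalk _ _).mpr h1', h2', h3'⟩, h4', w,
        by rw [wWeight_eq_cw]; exact hwW, rfl⟩
    have hle := le_csSup hlambdd hmem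
    have hpos : (0 : ℝ) < (W.length : ℝ) - 1 := by
      have : (2 : ℝ) ≤ (W.length : ℝ) := by exact_mod_cast h2'
      linarith
    exact (div_le_iff₀ hpos).mp hle
  -- paths from `i` to `0` have weight at most `α_i = a`
  have hpathb : ∀ W : List (Fin (n + 2)), cwalk Asup W → W.Nodup → W.head? = some i →
      W.getLast? = some 0 → cw Asup W ≤ (a : EReal) := by
    intro W h1' h2' h3' h4'
    rw [ha, ← wWeight_eq_cw]
    apply le_sSup
    exact ⟨W, ⟨(isWalk_iff_cwalk _ _).mpr h1', h2'⟩, h3', h4', rfl⟩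
  -- the decomposition bound
  obtain ⟨p, c, w, hpm, hlen, hwW, hwle⟩ :=
    walk_bound Asup 0 hsupnotop (lamStar Asup 0) a i hcycbound hpathb W₁.length W₁ le_rfl
      hcwalk hh hl hdrop
  rw [hw, hwW] at htwle
  have hrw : r ≤ w := by exact_mod_cast htwle
  have hracle : r ≤ a + lamStar Asup 0 * (c : ℝ) := le_trans hrw hwle
  have hcle : (c : ℝ) ≤ (r - a) / lamStar Asup 0 := by
    rw [le_div_iff_of_neg hlamneg]
    have := mul_comm (lamStar Asup 0) (c : ℝ)
    linarith
  have hlenr : (W₁.length : ℝ) = (p : ℝ) + (c : ℝ) + 1 := by exact_mod_cast hlen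
  have hpr : (p : ℝ) ≤ (n : ℝ) + 1 := by
    have hp' : p ≤ n + 1 := by omega
    exact_mod_cast hp'
  push_cast
  linarith

end MaxPlusTransient
end
end

section
/- Under the standing assumptions, suppose W₂ is a final walk from 1 to j on the trellis digraph 𝒯_{Γ(k)} of maximal weight, i.e. p_𝒯(W₂) = v_j*. Then its length satisfies l(W₂) ≤ (v_j* − β_j)/λ* + (n − 1). -/
/-
Common framework for "A bound for the rank-one transient of inhomogeneous matrix
products in special case" (Kennedy-Cochran-Patrick, Sergeev, Berežný).

We work over the max-plus semiring, modelled inside `EReal` (so `⊥ = -∞` is the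
max-plus zero and ordinary addition is the max-plus multiplication).  Matrices are
functions `Fin m → Fin m → EReal`.  The distinguished node "1" of the paper is the
node `0 : Fin (n+2)` (so that `n + 2 ≥ 2` plays the role of the paper's `n ≥ 2`).

A walk is a nonempty list of nodes.  Walks on the trellis digraph of the product
`A 1 ⊗ ⋯ ⊗ A k` additionally record the level at which they start: the arc from the
`(l-1)`-st to the `l`-th node of a walk starting at level `s` has weight given by the
matrix `A (s + l)`.
-/

open scoped Classical

noncomputable section

namespace MaxPlusTransient

variable {m : ℕ}

/-! ### Auxiliary lemmas -/

section Aux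

variable {m : ℕ}

lemma tw_cons (M : ℕ → Fin m → Fin m → EReal) (s : ℕ) (a b : Fin m) (t : List (Fin m)) :
    tw M s (a :: b :: t) = M (s + 1) a b + tw M (s + 1) (b :: t) := rfl

lemma twalk_cons (M : ℕ → Fin m → Fin m → EReal) (s : ℕ) (a b : Fin m) (t : List (Fin m)) :
    twalk M s (a :: b :: t) ↔ M (s + 1) a b ≠ ⊥ ∧ twalk M (s + 1) (b :: t) := Iff.rfl

lemma tw_const (A : Fin m → Fin m → EReal) :
    ∀ (W : List (Fin m)) (s t : ℕ), tw (fun _ => A) s W = tw (fun _ => A) t W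
  | [], _, _ => rfl
  | [_], _, _ => rfl
  | a :: b :: T, s, t => by
      rw [tw_cons, tw_cons, tw_const A (b :: T) (s + 1) (t + 1)]

lemma twalk_const (A : Fin m → Fin m → EReal) :
    ∀ (W : List (Fin m)) (s t : ℕ), twalk (fun _ => A) s W ↔ twalk (fun _ => A) t W
  | [], _, _ => Iff.rfl
  | [_], _, _ => Iff.rfl
  | a :: b :: T, s, t => by
      rw [twalk_cons, twalk_cons, twalk_const A (b :: T) (s + 1) (t + 1)]

lemma wWeight_cons (A : Fin m → Fin m → EReal) (a b : Fin m) (t : List (Fin m)) :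
    wWeight A (a :: b :: t) = A a b + wWeight A (b :: t) := by
  unfold wWeight
  rw [tw_cons, tw_const A (b :: t) 1 0]

lemma wWeight_single (A : Fin m → Fin m → EReal) (a : Fin m) : wWeight A [a] = 0 := rfl

lemma isWalk_cons (A : Fin m → Fin m → EReal) (a b : Fin m) (t : List (Fin m)) :
    isWalk A (a :: b :: t) ↔ A a b ≠ ⊥ ∧ isWalk A (b :: t) := by
  unfold isWalk
  rw [twalk_cons, twalk_const A (b :: t) 1 0]

lemma isWalk_single (A : Fin m → Fin m → EReal) (a : Fin m) : isWalk A [a] := trivial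

lemma wWeight_append (A : Fin m → Fin m → EReal) (v : Fin m) :
    ∀ (X Y : List (Fin m)),
      wWeight A (X ++ v :: Y) = wWeight A (X ++ [v]) + wWeight A (v :: Y)
  | [], Y => by simp [wWeight_single]
  | [a], Y => by
      simp only [List.cons_append, List.nil_append]
      rw [wWeight_cons, wWeight_cons, wWeight_single, add_zero]
  | a :: b :: X, Y => by
      have ih := wWeight_append A v (b :: X) Y
      simp only [List.cons_append] at ih ⊢
      rw [wWeight_cons, wWeight_cons, ih, add_assoc]

lemma isWalk_append (A : Fin m → Fin m → EReal) (v : Fin m) :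
    ∀ (X Y : List (Fin m)),
      isWalk A (X ++ v :: Y) ↔ isWalk A (X ++ [v]) ∧ isWalk A (v :: Y)
  | [], Y => by simp [isWalk_single]
  | [a], Y => by
      simp only [List.cons_append, List.nil_append]
      rw [isWalk_cons, isWalk_cons]
      simp [isWalk_single]
  | a :: b :: X, Y => by
      have ih := isWalk_append A v (b :: X) Y
      simp only [List.cons_append] at ih ⊢
      rw [isWalk_cons, isWalk_cons, ih, and_assoc]

lemma wWeight_real (A : Fin m → Fin m → EReal) (hA : ∀ i j, A i j ≠ ⊤) :
    ∀ W : List (Fin m), isWalk A W → ∃ y : ℝ, wWeight A W = (y : EReal)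
  | [], h => absurd h (by simp [isWalk, twalk])
  | [a], _ => ⟨0, by simp [wWeight_single]⟩
  | a :: b :: T, h => by
      obtain ⟨h1, h2⟩ := (isWalk_cons A a b T).mp h
      obtain ⟨y, hy⟩ := wWeight_real A hA (b :: T) h2
      lift A a b to ℝ using ⟨hA a b, h1⟩ with x hx
      exact ⟨x + y, by rw [wWeight_cons, hy, ← hx]; exact_mod_cast rfl⟩

lemma exists_dup {α : Type*} :
    ∀ T : List α, ¬ T.Nodup → ∃ (X Y Z : List α) (v : α), T = X ++ v :: Y ++ v :: Z := by
  intro T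
  induction T with
  | nil => intro h; exact absurd List.nodup_nil h
  | cons a T ih =>
      intro h
      rw [List.nodup_cons] at h
      push_neg at h
      by_cases ha : a ∈ T
      · obtain ⟨Y, Z, rfl⟩ := List.append_of_mem ha
        exact ⟨[], Y, Z, a, rfl⟩
      · obtain ⟨X, Y, Z, v, rfl⟩ := ih (h ha)
        exact ⟨a :: X, Y, Z, v, rfl⟩

/-- Splitting off a cycle from a walk.  Note `P ++ u :: Y ++ u :: Z`
parses as `(P ++ (u :: Y)) ++ (u :: Z)`. -/
lemma split_walk {A : Fin m → Fin m → EReal} {P Y Z : List (Fin m)} {u : Fin m}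
    (h : isWalk A (P ++ u :: Y ++ u :: Z)) :
    isWalk A (P ++ u :: Z) ∧ isWalk A (u :: Y ++ [u]) := by
  obtain ⟨h1, h2⟩ := (isWalk_append A u (P ++ u :: Y) Z).mp h
  rw [show (P ++ u :: Y) ++ [u] = P ++ u :: (Y ++ [u]) from by simp,
      isWalk_append A u P (Y ++ [u])] at h1
  exact ⟨(isWalk_append A u P Z).mpr ⟨h1.1, h2⟩, h1.2⟩

lemma split_weight (A : Fin m → Fin m → EReal) (P Y Z : List (Fin m)) (u : Fin m) :
    wWeight A (P ++ u :: Y ++ u :: Z)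
      = wWeight A (P ++ u :: Z) + wWeight A (u :: Y ++ [u]) := by
  rw [wWeight_append A u (P ++ u :: Y) Z,
      show (P ++ u :: Y) ++ [u] = P ++ u :: (Y ++ [u]) from by simp,
      wWeight_append A u P (Y ++ [u]), wWeight_append A u P Z,
      show (u :: (Y ++ [u])) = u :: Y ++ [u] from by simp]
  abel

lemma head?_split (P Z Y' : List (Fin m)) (u : Fin m) :
    (P ++ u :: Z).head? = (P ++ u :: Y').head? := by
  cases P <;> simp

lemma getLast?_split (P Y Z : List (Fin m)) (u : Fin m) :
    (P ++ u :: Y ++ u :: Z).getLast? = (P ++ u :: Z).getLast? := by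
  have h1 : (u :: Z).getLast? = some ((u :: Z).getLast (by simp)) :=
    List.getLast?_eq_getLast _
  rw [List.getLast?_append, List.getLast?_append (l := P) (l' := u :: Z), h1]
  rfl

lemma mem_tail_split {P Y Z : List (Fin m)} {u v : Fin m}
    (h : v ∈ (P ++ u :: Z).tail) : v ∈ (P ++ u :: Y ++ u :: Z).tail := by
  cases P with
  | nil => simp at h ⊢; tauto
  | cons p P => simp at h ⊢; tauto

lemma mem_cycle_split {P Y Z : List (Fin m)} {u v : Fin m}
    (h : v ∈ u :: Y ++ [u]) : v ∈ (P ++ u :: Y ++ u :: Z).tail := by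
  cases P with
  | nil => simp at h ⊢; tauto
  | cons p P => simp at h ⊢; tauto

lemma mem_split {P Y Z : List (Fin m)} {u v : Fin m}
    (h : v ∈ P ++ u :: Z) : v ∈ P ++ u :: Y ++ u :: Z := by
  simp at h ⊢; tauto

lemma mem_cycle_split' {P Y Z : List (Fin m)} {u v : Fin m}
    (h : v ∈ u :: Y ++ [u]) : v ∈ P ++ u :: Y ++ u :: Z := by
  simp at h ⊢; tauto

lemma nodup_len {n : ℕ} (T : List (Fin (n + 2))) (hT : T.Nodup)
    (h0 : ∀ v ∈ T, v ≠ 0) : T.length ≤ n + 1 := by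
  have hsub : T.toFinset ⊆ Finset.univ.erase 0 := fun v hv =>
    Finset.mem_erase.mpr ⟨h0 v (List.mem_toFinset.mp hv), Finset.mem_univ _⟩
  have := Finset.card_le_card hsub
  rw [List.toFinset_card_of_nodup hT] at this
  simpa using this

lemma cycle_is_cycle {A : Fin m → Fin m → EReal} {Y : List (Fin m)} {u : Fin m}
    (h : isWalk A (u :: Y ++ [u])) : isCycle A (u :: Y ++ [u]) := by
  refine ⟨h, by simp, ?_⟩
  rw [List.getLast?_concat]
  cases Y <;> rfl

end Aux
section Main

lemma tw_le_wWeight {M : ℕ → Fin m → Fin m → EReal} {A : Fin m → Fin m → EReal} {k : ℕ}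
    (hle : ∀ l, 1 ≤ l → l ≤ k → ∀ a b, M l a b ≤ A a b) :
    ∀ (W : List (Fin m)) (s : ℕ), twalk M s W → s + (W.length - 1) ≤ k →
      tw M s W ≤ wWeight A W ∧ isWalk A W
  | [], s, h, _ => absurd h (by simp [twalk])
  | [a], s, _, _ => ⟨le_rfl, isWalk_single A a⟩
  | a :: b :: T, s, h, hs => by
      obtain ⟨h1, h2⟩ := (twalk_cons M s a b T).mp h
      have hs1 : s + 1 ≤ k := by simp at hs; omega
      have hs2 : (s + 1) + ((b :: T).length - 1) ≤ k := by simp at hs ⊢; omega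
      obtain ⟨ih1, ih2⟩ := tw_le_wWeight hle (b :: T) (s + 1) h2 hs2
      have harc : M (s + 1) a b ≤ A a b := hle (s + 1) (by omega) hs1 a b
      refine ⟨?_, (isWalk_cons A a b T).mpr ⟨?_, ih2⟩⟩
      · rw [tw_cons, wWeight_cons]; exact add_le_add harc ih1
      · intro hbot; rw [hbot] at harc; exact h1 (le_bot_iff.mp harc)

variable {n : ℕ} {A : Fin (n + 2) → Fin (n + 2) → EReal}

lemma cycle_len_ge {C : List (Fin (n + 2))} (hC : isCycle A C) :
    (1 : ℝ) ≤ (C.length : ℝ) - 1 := by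
  have h := hC.2.1
  have : (2 : ℝ) ≤ (C.length : ℝ) := by exact_mod_cast h
  linarith

lemma cycle_neg (hneg : ∀ W, isCycle A W → (∃ v ∈ W, v ≠ 0) → wWeight A W < 0)
    {C : List (Fin (n + 2))} (hC : isCycle A C) (h0 : ∀ v ∈ C, v ≠ 0) {y : ℝ}
    (hy : wWeight A C = (y : EReal)) : y < 0 := by
  have hne : ∃ v ∈ C, v ≠ 0 := by
    cases C with
    | nil => have := hC.2.1; simp at this
    | cons c T => exact ⟨c, List.mem_cons_self, h0 c List.mem_cons_self⟩
  have := hneg C hC hne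
  rw [hy] at this
  exact_mod_cast this

lemma mean_mem {C : List (Fin (n + 2))} (hC : isCycle A C) (h0 : ∀ v ∈ C, v ≠ 0) {y : ℝ}
    (hy : wWeight A C = (y : EReal)) :
    y / ((C.length : ℝ) - 1) ∈ lamSet A 0 :=
  ⟨C, hC, h0, y, hy, rfl⟩

lemma lamSet_bdd (hneg : ∀ W, isCycle A W → (∃ v ∈ W, v ≠ 0) → wWeight A W < 0) :
    BddAbove (lamSet A 0) := by
  refine ⟨0, fun x hx => ?_⟩
  obtain ⟨C, hC, h0, r, hr, rfl⟩ := hx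
  have hrneg : r < 0 := cycle_neg hneg hC h0 hr
  have hl := cycle_len_ge hC
  exact div_nonpos_of_nonpos_of_nonneg hrneg.le (by linarith)

lemma cycle_le_lamStar (hneg : ∀ W, isCycle A W → (∃ v ∈ W, v ≠ 0) → wWeight A W < 0)
    {C : List (Fin (n + 2))} {y : ℝ} (hC : isCycle A C) (h0 : ∀ v ∈ C, v ≠ 0)
    (hy : wWeight A C = (y : EReal)) :
    y ≤ lamStar A 0 * ((C.length : ℝ) - 1) := by
  have hl := cycle_len_ge hC
  have hmean := le_csSup (lamSet_bdd hneg) (mean_mem hC h0 hy)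
  calc y = y / ((C.length : ℝ) - 1) * ((C.length : ℝ) - 1) :=
        (div_mul_cancel₀ _ (by linarith)).symm
    _ ≤ lamStar A 0 * ((C.length : ℝ) - 1) :=
        mul_le_mul_of_nonneg_right hmean (by linarith)

lemma cycle_split_s1 {C : List (Fin (n + 2))}
    (hC : isCycle A C) (h0 : ∀ v ∈ C, v ≠ 0) (hlong : n + 4 ≤ C.length) :
    ∃ C1 C2 : List (Fin (n + 2)),
      isCycle A C1 ∧ (∀ v ∈ C1, v ≠ 0) ∧ isCycle A C2 ∧ (∀ v ∈ C2, v ≠ 0) ∧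
      wWeight A C = wWeight A C2 + wWeight A C1 ∧
      C1.length + 1 ≤ C.length ∧ C2.length + 1 ≤ C.length ∧
      C1.length + C2.length = C.length + 1 := by
  obtain ⟨hWalk, hlen2, hends⟩ := hC
  have hne : C ≠ [] := by intro h; rw [h] at hlen2; simp at hlen2
  have hD : C.dropLast ++ [C.getLast hne] = C := List.dropLast_append_getLast hne
  have hDnodup : ¬ C.dropLast.Nodup := by
    intro hnd
    have hlenD : C.dropLast.length ≤ n + 1 :=
      nodup_len _ hnd (fun v hv => h0 v (by rw [← hD]; exact List.mem_append_left _ hv))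
    rw [List.length_dropLast] at hlenD
    omega
  obtain ⟨X, Y, Z, u, hXYZ⟩ := exists_dup _ hDnodup
  set e := C.getLast hne with he
  have hCeq : C = X ++ u :: Y ++ u :: (Z ++ [e]) := by
    conv_lhs => rw [← hD, hXYZ]
    simp
  have hCeq2 : C = X ++ u :: (Y ++ u :: (Z ++ [e])) := by rw [hCeq]; simp
  have hW := hWalk
  rw [hCeq] at hW
  obtain ⟨hW2, hW1⟩ := split_walk hW
  have hlC : C.length = X.length + Y.length + Z.length + 3 := by
    conv_lhs => rw [hCeq]
    simp [List.length_append]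
    omega
  have hl1' : (u :: Y ++ [u]).length = Y.length + 2 := by simp
  have hl2' : (X ++ u :: (Z ++ [e])).length = X.length + Z.length + 2 := by
    simp [List.length_append]
    omega
  refine ⟨u :: Y ++ [u], X ++ u :: (Z ++ [e]), cycle_is_cycle hW1,
    fun v hv => h0 v (by rw [hCeq]; exact mem_cycle_split' hv),
    ⟨hW2, by rw [hl2']; omega, ?_⟩,
    fun v hv => h0 v (by rw [hCeq]; exact mem_split hv),
    by rw [hCeq]; exact split_weight A X Y (Z ++ [e]) u,
    by rw [hl1', hlC]; omega, by rw [hl2', hlC]; omega,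
    by rw [hl1', hl2', hlC]; omega⟩
  rw [show (X ++ u :: (Z ++ [e])).head? = C.head? from by
        rw [hCeq2]; exact head?_split X (Z ++ [e]) (Y ++ u :: (Z ++ [e])) u,
      show (X ++ u :: (Z ++ [e])).getLast? = C.getLast? from by
        rw [hCeq]; exact (getLast?_split X Y (Z ++ [e]) u).symm]
  exact hends

lemma exists_short_cycle :
    ∀ (N : ℕ) (C : List (Fin (n + 2))), C.length ≤ N → isCycle A C → (∀ v ∈ C, v ≠ 0) →
      ∃ C', C'.length ≤ n + 3 ∧ isCycle A C' ∧ ∀ v ∈ C', v ≠ 0 := by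
  intro N
  induction N with
  | zero => intro C h hC _; have := hC.2.1; omega
  | succ N ih =>
      intro C h hC h0
      by_cases hlen : C.length ≤ n + 3
      · exact ⟨C, hlen, hC, h0⟩
      · obtain ⟨C1, C2, hC1, h01, _, _, _, hl1, _, _⟩ := cycle_split_s1 hC h0 (by omega)
        exact ih C1 (by omega) hC1 h01

lemma cycle_bound {Mx : ℝ}
    (hshort : ∀ (C : List (Fin (n + 2))) (y : ℝ), C.length ≤ n + 3 → isCycle A C →
      (∀ v ∈ C, v ≠ 0) → wWeight A C = (y : EReal) → y ≤ Mx * ((C.length : ℝ) - 1))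
    (hAtop : ∀ i j, A i j ≠ ⊤) :
    ∀ (N : ℕ) (C : List (Fin (n + 2))) (y : ℝ), C.length ≤ N → isCycle A C →
      (∀ v ∈ C, v ≠ 0) → wWeight A C = (y : EReal) → y ≤ Mx * ((C.length : ℝ) - 1) := by
  intro N
  induction N with
  | zero => intro C y h hC _ _; have := hC.2.1; omega
  | succ N ih =>
    intro C y h hC h0 hy
    by_cases hlen : C.length ≤ n + 3
    · exact hshort C y hlen hC h0 hy
    · obtain ⟨C1, C2, hC1, h01, hC2, h02, hw, hl1, hl2, hsum⟩ := cycle_split_s1 hC h0 (by omega)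
      obtain ⟨y1, hy1⟩ := wWeight_real A hAtop C1 hC1.1
      obtain ⟨y2, hy2⟩ := wWeight_real A hAtop C2 hC2.1
      have hyy : y = y2 + y1 := by
        have h1 : (y : EReal) = ((y2 + y1 : ℝ) : EReal) := by
          rw [← hy, hw, hy1, hy2]; exact_mod_cast rfl
        exact_mod_cast h1
      have b1 := ih C1 y1 (by omega) hC1 h01 hy1
      have b2 := ih C2 y2 (by omega) hC2 h02 hy2
      have hc : ((C1.length : ℝ) - 1) + ((C2.length : ℝ) - 1) = (C.length : ℝ) - 1 := by
        have h2 : (C1.length : ℝ) + (C2.length : ℝ) = (C.length : ℝ) + 1 := by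
          exact_mod_cast hsum
        linarith
      have hma := mul_add Mx ((C1.length : ℝ) - 1) ((C2.length : ℝ) - 1)
      rw [hc] at hma
      linarith

lemma lamStar_neg
    (hAtop : ∀ i j, A i j ≠ ⊤)
    (hneg : ∀ W, isCycle A W → (∃ v ∈ W, v ≠ 0) → wWeight A W < 0)
    (hcyc : ∃ W, isCycle A W ∧ ∀ v ∈ W, v ≠ (0 : Fin (n + 2))) :
    lamStar A 0 < 0 := by
  classical
  set S : Set ℝ := {x | ∃ C : List (Fin (n + 2)), C.length ≤ n + 3 ∧ isCycle A C ∧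
    (∀ v ∈ C, v ≠ 0) ∧ ∃ y : ℝ, wWeight A C = (y : EReal) ∧
      x = y / ((C.length : ℝ) - 1)} with hS
  have hSfin : S.Finite := by
    apply Set.Finite.subset (Set.Finite.image
      (fun C : List (Fin (n + 2)) => (wWeight A C).toReal / ((C.length : ℝ) - 1))
      (List.finite_length_le (Fin (n + 2)) (n + 3)))
    rintro x ⟨C, hlen, _, _, y, hy, rfl⟩
    refine ⟨C, hlen, ?_⟩
    show (wWeight A C).toReal / ((C.length : ℝ) - 1) = y / ((C.length : ℝ) - 1)
    rw [hy]; simp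
  obtain ⟨W0, hW0, h00⟩ := hcyc
  obtain ⟨C', hlen', hC', h0'⟩ := exists_short_cycle W0.length W0 le_rfl hW0 h00
  obtain ⟨y', hy'⟩ := wWeight_real A hAtop C' hC'.1
  have hSne : S.Nonempty := ⟨y' / ((C'.length : ℝ) - 1), C', hlen', hC', h0', y', hy', rfl⟩
  have hMxmem : sSup S ∈ S := hSne.csSup_mem hSfin
  have hMxneg : sSup S < 0 := by
    obtain ⟨C, hlen, hC, h0, y, hy, hxy⟩ := hMxmem
    have hyneg : y < 0 := cycle_neg hneg hC h0 hy
    have hl := cycle_len_ge hC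
    rw [hxy]
    exact div_neg_of_neg_of_pos hyneg (by linarith)
  have hshort : ∀ (C : List (Fin (n + 2))) (y : ℝ), C.length ≤ n + 3 → isCycle A C →
      (∀ v ∈ C, v ≠ 0) → wWeight A C = (y : EReal) → y ≤ sSup S * ((C.length : ℝ) - 1) := by
    intro C y hlen hC h0 hy
    have hmem : y / ((C.length : ℝ) - 1) ∈ S := ⟨C, hlen, hC, h0, y, hy, rfl⟩
    have hle := le_csSup hSfin.bddAbove hmem
    have hl := cycle_len_ge hC
    calc y = y / ((C.length : ℝ) - 1) * ((C.length : ℝ) - 1) :=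
          (div_mul_cancel₀ _ (by linarith)).symm
      _ ≤ sSup S * ((C.length : ℝ) - 1) := mul_le_mul_of_nonneg_right hle (by linarith)
  have hlamle : lamStar A 0 ≤ sSup S := by
    apply csSup_le
    · obtain ⟨y0, hy0⟩ := wWeight_real A hAtop W0 hW0.1
      exact ⟨y0 / ((W0.length : ℝ) - 1), mean_mem hW0 h00 hy0⟩
    · rintro x ⟨C, hC, h0, r, hr, rfl⟩
      have hb := cycle_bound hshort hAtop C.length C r le_rfl hC h0 hr
      have hl := cycle_len_ge hC
      exact (div_le_iff₀ (by linarith)).mpr hb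
  exact lt_of_le_of_lt hlamle hMxneg

lemma final_bound {j : Fin (n + 2)} {b lam : ℝ}
    (hAtop : ∀ i j, A i j ≠ ⊤)
    (hb : ∀ (W : List (Fin (n + 2))) (x : ℝ), isPath A W → W.head? = some 0 →
      W.getLast? = some j → wWeight A W = (x : EReal) → x ≤ b)
    (hlam : ∀ (C : List (Fin (n + 2))) (y : ℝ), isCycle A C → (∀ v ∈ C, v ≠ 0) →
      wWeight A C = (y : EReal) → y ≤ lam * ((C.length : ℝ) - 1))
    (hlamneg : lam ≤ 0) :
    ∀ (N : ℕ) (W : List (Fin (n + 2))), W.length ≤ N → isWalk A W → W.head? = some 0 →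
      W.getLast? = some j → (∀ v ∈ W.tail, v ≠ 0) → ∀ x : ℝ, wWeight A W = (x : EReal) →
      x ≤ b + lam * max 0 ((W.length : ℝ) - 1 - ((n : ℝ) + 1)) := by
  intro N
  induction N with
  | zero =>
      intro W hlen _ hh
      cases W with
      | nil => simp at hh
      | cons a T => simp at hlen
  | succ N ih =>
    intro W hlen hW hh hl htail x hx
    obtain ⟨w, T, rfl⟩ : ∃ w T, W = w :: T := by
      cases W with
      | nil => simp at hh
      | cons w T => exact ⟨w, T, rfl⟩
    have hw0 : w = 0 := by simpa using hh
    subst hw0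
    have hT0 : ∀ v ∈ T, v ≠ 0 := by simpa using htail
    by_cases hnd : ((0 : Fin (n + 2)) :: T).Nodup
    · have hxb := hb _ x ⟨hW, hnd⟩ hh hl hx
      have hTlen : T.length ≤ n + 1 := nodup_len T (List.nodup_cons.mp hnd).2 hT0
      have hlr : (((0 : Fin (n + 2)) :: T).length : ℝ) ≤ (n : ℝ) + 2 := by
        have : ((0 : Fin (n + 2)) :: T).length ≤ n + 2 := by simp; omega
        exact_mod_cast this
      rw [max_eq_left (by linarith), mul_zero, add_zero]
      exact hxb
    · have hTnd : ¬ T.Nodup := by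
        intro h
        exact hnd (List.nodup_cons.mpr ⟨fun hmem => hT0 0 hmem rfl, h⟩)
      obtain ⟨X, Y, Z, u, rfl⟩ := exists_dup T hTnd
      have he : (0 : Fin (n + 2)) :: (X ++ u :: Y ++ u :: Z)
          = (0 :: X) ++ u :: Y ++ u :: Z := by simp
      rw [he] at hW hh hl htail hx hlen ⊢
      set P : List (Fin (n + 2)) := 0 :: X with hP
      obtain ⟨hW', hWc⟩ := split_walk hW
      obtain ⟨x', hx'⟩ := wWeight_real A hAtop _ hW'
      obtain ⟨y, hy⟩ := wWeight_real A hAtop _ hWc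
      have hxsum : x = x' + y := by
        have h1 := split_weight A P Y Z u
        rw [hx, hx', hy] at h1
        exact_mod_cast h1
      have hCc : isCycle A (u :: Y ++ [u]) := cycle_is_cycle hWc
      have h0c : ∀ v ∈ u :: Y ++ [u], v ≠ 0 := fun v hv => htail v (mem_cycle_split hv)
      have hyb := hlam _ y hCc h0c hy
      have hCl : ((u :: Y ++ [u]).length : ℝ) - 1 = (Y.length : ℝ) + 1 := by
        simp
      rw [hCl] at hyb
      have hh' : (P ++ u :: Z).head? = some 0 := by rw [hP]; rfl
      have hl' : (P ++ u :: Z).getLast? = some j := by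
        rw [← getLast?_split P Y Z u]; exact hl
      have htail' : ∀ v ∈ (P ++ u :: Z).tail, v ≠ 0 := fun v hv => htail v (mem_tail_split hv)
      have hlen' : (P ++ u :: Z).length ≤ N := by
        simp [List.length_append] at hlen ⊢; omega
      have ihx := ih (P ++ u :: Z) hlen' hW' hh' hl' htail' x' hx'
      have hLeq : ((P ++ u :: Y ++ u :: Z).length : ℝ)
          = ((P ++ u :: Z).length : ℝ) + ((Y.length : ℝ) + 1) := by
        simp [List.length_append]; push_cast; ring
      set L' := ((P ++ u :: Z).length : ℝ) - 1 - ((n : ℝ) + 1) with hL'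
      have hm2 : max 0 (((P ++ u :: Y ++ u :: Z).length : ℝ) - 1 - ((n : ℝ) + 1))
          ≤ max 0 L' + ((Y.length : ℝ) + 1) := by
        apply max_le
        · have h1 := le_max_left 0 L'
          have h2 : (0 : ℝ) ≤ (Y.length : ℝ) + 1 := by positivity
          linarith
        · rw [hLeq]
          have := le_max_right 0 L'
          linarith
      have hmul := mul_le_mul_of_nonpos_left hm2 hlamneg
      rw [mul_add] at hmul
      linarith

end Main
/-- length bound for a maximal-weight final walk. -/
theorem rank_one_transient_statement1 {n : ℕ}
    (𝒳 : Set (Fin (n + 2) → Fin (n + 2) → EReal))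
    (Asup Ainf : Fin (n + 2) → Fin (n + 2) → EReal)
    (hstand : Standing 𝒳 Asup Ainf 0)
    (k : ℕ) (hk : 1 ≤ k)
    (A : ℕ → Fin (n + 2) → Fin (n + 2) → EReal)
    (hA : ∀ l, 1 ≤ l → l ≤ k → A l ∈ 𝒳)
    (hcyc : ∃ W, isCycle Asup W ∧ ∀ v ∈ W, v ≠ (0 : Fin (n + 2)))
    (j : Fin (n + 2))
    -- `β_j` is the (finite) maximal weight of a path from `one` to `j` on `D_{A^sup}`
    (b : ℝ) (hb : (b : EReal) = betaE Asup 0 j)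
    -- `W₂` is a final walk from `one` to `j` of maximal weight `v_j* = r`
    (r : ℝ) (s : ℕ) (W₂ : List (Fin (n + 2)))
    (h2 : isFinalWalk A 0 k j s W₂)
    (hw : tw A s W₂ = (r : EReal))
    (hopt : (r : EReal) = vStar A 0 k j) :
    (W₂.length : ℝ) - 1 ≤ (r - b) / lamStar Asup 0 + ((n + 2 : ℝ) - 1) := by
  obtain ⟨hne, hXtop, hsup, hinf, hstop, hbot, hirr, hirrinf, hgeom, hdiag, hXneg,
    hsdiag, hsneg⟩ := hstand
  have hle : ∀ l, 1 ≤ l → l ≤ k → ∀ a b', A l a b' ≤ Asup a b' := by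
    intro l h1 h2 a b'
    rw [hsup a b']
    exact le_biSup (fun X => X a b') (hA l h1 h2)
  obtain ⟨htw, hlev, hh, hlst, htail⟩ := h2
  obtain ⟨hWle, hWwalk⟩ := tw_le_wWeight hle W₂ s htw (le_of_eq hlev)
  obtain ⟨w, hwreal⟩ := wWeight_real Asup hstop W₂ hWwalk
  have hrw : r ≤ w := by
    rw [hw, hwreal] at hWle
    exact_mod_cast hWle
  have hbp : ∀ (W : List (Fin (n + 2))) (x : ℝ), isPath Asup W → W.head? = some 0 →
      W.getLast? = some j → wWeight Asup W = (x : EReal) → x ≤ b := by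
    intro W x hp hhd hlt hx
    have h1 : (x : EReal) ≤ betaE Asup 0 j := by
      rw [← hx]
      exact le_sSup ⟨W, hp, hhd, hlt, rfl⟩
    rw [← hb] at h1
    exact_mod_cast h1
  have hlamneg : lamStar Asup 0 < 0 := lamStar_neg hstop hsneg hcyc
  have hlamb : ∀ (C : List (Fin (n + 2))) (y : ℝ), isCycle Asup C → (∀ v ∈ C, v ≠ 0) →
      wWeight Asup C = (y : EReal) → y ≤ lamStar Asup 0 * ((C.length : ℝ) - 1) :=
    fun C y hC h0 hy => cycle_le_lamStar hsneg hC h0 hy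
  have hbound := final_bound hstop hbp hlamb hlamneg.le W₂.length W₂ le_rfl hWwalk hh
    hlst htail w hwreal
  set lam := lamStar Asup 0
  set L := (W₂.length : ℝ) - 1 with hL
  have hmaxge : L - ((n : ℝ) + 1) ≤ max 0 (L - ((n : ℝ) + 1)) := le_max_right _ _
  have h6 : lam * max 0 (L - ((n : ℝ) + 1)) ≤ lam * (L - ((n : ℝ) + 1)) :=
    mul_le_mul_of_nonpos_left hmaxge hlamneg.le
  have h7 : L - ((n : ℝ) + 1) ≤ (r - b) / lam := by
    rw [le_div_iff_of_neg hlamneg]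
    calc r - b ≤ lam * (L - ((n : ℝ) + 1)) := by linarith
      _ = (L - ((n : ℝ) + 1)) * lam := mul_comm _ _
  have h8 : ((n : ℝ) + 2) - 1 = (n : ℝ) + 1 := by ring
  push_cast
  linarith

end MaxPlusTransient
end
end
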